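/- Let A be a nonzero n×n complex matrix with ‖I + A‖ ≥ 1, where ‖·‖ is the operator norm induced by the Euclidean norm. Suppose that Au = 0 for every unit vector u ∈ ℂⁿ satisfying ‖(I + A)u‖ = ‖I + A‖. Then ‖I + A‖ = 1, and there exist an integer k with 1 ≤ k < n and a unitary matrix U such that U*AU = 0_k ⊕ Ã is block diagonal, where 0_k is the k×k zero matrix and Ã is an invertible (n−k)×(n−k) matrix satisfying ‖I_{n−k} + Ã‖ < 1. -/

import Mathlib

open Matrix

/-- The operator norm of a complex square matrix induced by the Euclidean norm. -/
noncomputable def euclOpNorm {n : ℕ} (M : Matrix (Fin n) (Fin n) ℂ) : ℝ :=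
  ‖Matrix.toEuclideanCLM (𝕜 := ℂ) M‖

open scoped InnerProductSpace

section AuxUnitaryBlock

lemma exists_norm_attained {E F : Type*} [NormedAddCommGroup E] [NormedSpace ℂ E]
    [FiniteDimensional ℂ E] [Nontrivial E] [NormedAddCommGroup F] [NormedSpace ℂ F]
    (f : E →L[ℂ] F) : ∃ u : E, ‖u‖ = 1 ∧ ‖f u‖ = ‖f‖ := by
  obtain ⟨x0, hx0⟩ := exists_norm_eq E (zero_le_one (α := ℝ))
  have hs : (Metric.sphere (0:E) 1).Nonempty := ⟨x0, by simpa using hx0⟩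
  obtain ⟨u, hu, hmax⟩ := (isCompact_sphere (0:E) 1).exists_isMaxOn hs
    (f.continuous.norm).continuousOn
  have hu1 : ‖u‖ = 1 := by simpa using hu
  refine ⟨u, hu1, le_antisymm (by simpa [hu1] using f.le_opNorm u) ?_⟩
  refine f.opNorm_le_bound (norm_nonneg _) fun x => ?_
  rcases eq_or_ne x 0 with rfl | hx
  · simp
  · have hxn : ‖x‖ ≠ 0 := norm_ne_zero_iff.2 hx
    have hmem : (‖x‖⁻¹ • x) ∈ Metric.sphere (0:E) 1 := by
      simp [norm_smul, abs_of_nonneg, inv_mul_cancel₀ hxn]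
    have := hmax hmem
    simp only [_root_.map_smul, norm_smul, norm_inv, norm_norm] at this
    calc ‖f x‖ = ‖x‖ * (‖x‖⁻¹ * ‖f x‖) := by field_simp
    _ ≤ ‖x‖ * ‖f u‖ := by
        exact mul_le_mul_of_nonneg_left (by simpa [norm_smul] using this) (norm_nonneg x)
    _ = ‖f u‖ * ‖x‖ := mul_comm _ _

lemma adjoint_fixed {E : Type*} [NormedAddCommGroup E] [InnerProductSpace ℂ E]
    [FiniteDimensional ℂ E] (T : E →L[ℂ] E) (hT : ‖T‖ ≤ 1) (u : E) (hu : T u = u) :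
    ContinuousLinearMap.adjoint T u = u := by
  rcases eq_or_ne u 0 with rfl | hu0
  · simp
  set a := ContinuousLinearMap.adjoint T u with ha
  have hadj : ‖ContinuousLinearMap.adjoint T‖ = ‖T‖ :=
    (ContinuousLinearMap.adjoint (𝕜 := ℂ) (E := E) (F := E)).norm_map T
  have hna : ‖a‖ ≤ ‖u‖ := by
    calc ‖a‖ ≤ ‖ContinuousLinearMap.adjoint T‖ * ‖u‖ := (ContinuousLinearMap.adjoint T).le_opNorm u
    _ ≤ 1 * ‖u‖ := by rw [hadj]; exact mul_le_mul_of_nonneg_right hT (norm_nonneg u)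
    _ = ‖u‖ := one_mul _
  have hinner : ⟪a, u⟫_ℂ = (‖u‖ : ℂ) * ‖u‖ := by
    rw [ha, ContinuousLinearMap.adjoint_inner_left, hu, inner_self_eq_norm_sq_to_K]
    norm_cast
    rw [sq]
    with_unfolding_all rfl
  have hge : ‖u‖ ≤ ‖a‖ := by
    have := norm_inner_le_norm (𝕜 := ℂ) a u
    rw [hinner] at this
    have h2 : ‖u‖ * ‖u‖ ≤ ‖a‖ * ‖u‖ := by
      calc ‖u‖ * ‖u‖ = ‖(‖u‖ : ℂ) * ‖u‖‖ := by
            rw [norm_mul]; simp [Complex.norm_real, abs_of_nonneg (norm_nonneg u)]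
      _ ≤ ‖a‖ * ‖u‖ := this
    exact le_of_mul_le_mul_right h2 (norm_pos_iff.2 hu0)
  have hae : ‖a‖ = ‖u‖ := le_antisymm hna hge
  have heq : (‖u‖ : ℂ) • a = (‖a‖ : ℂ) • u :=
    inner_eq_norm_mul_iff.mp (by rw [hinner, hae]; norm_cast)
  rw [hae] at heq
  have hn0 : (‖u‖ : ℂ) ≠ 0 := by simpa using norm_ne_zero_iff.2 hu0
  exact smul_right_injective E hn0 heq

lemma euclInner_eq_sum {n : ℕ} (f g : EuclideanSpace ℂ (Fin n)) :
    ⟪f, g⟫_ℂ = ∑ x, (starRingEnd ℂ) (f x) * g x := by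
  simp [PiLp.inner_apply, RCLike.inner_apply]
  exact Finset.sum_congr rfl fun _ _ => mul_comm _ _

lemma star_mul_self_of_orthonormal {n : ℕ} {ι : Type*} [Fintype ι] [DecidableEq ι]
    (e : ι ≃ Fin n) (v : ι → EuclideanSpace ℂ (Fin n)) (hv : Orthonormal ℂ v) :
    star (Matrix.of fun x y => v (e.symm y) x) * (Matrix.of fun x y => v (e.symm y) x) = 1 := by
  ext i j
  rw [Matrix.mul_apply, Matrix.one_apply]
  have h1 : ∑ x, (star (Matrix.of fun x y => v (e.symm y) x)) i x
      * (Matrix.of fun x y => v (e.symm y) x) x j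
      = ⟪v (e.symm i), v (e.symm j)⟫_ℂ := by
    rw [euclInner_eq_sum]
    apply Finset.sum_congr rfl
    intro x _
    simp [Matrix.star_apply]
  rw [h1, orthonormal_iff_ite.mp hv]
  by_cases hij : i = j
  · simp [hij]
  · have : e.symm i ≠ e.symm j := fun hc => hij (e.symm.injective hc)
    simp [hij, this]

lemma conj_entry_eq_inner {n : ℕ} {ι : Type*} [Fintype ι]
    (e : ι ≃ Fin n) (v : ι → EuclideanSpace ℂ (Fin n)) (A : Matrix (Fin n) (Fin n) ℂ)
    (i j : Fin n) :
    (star (Matrix.of fun x y => v (e.symm y) x) * A * (Matrix.of fun x y => v (e.symm y) x)) i j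
      = ⟪v (e.symm i), toEuclideanCLM (𝕜 := ℂ) A (v (e.symm j))⟫_ℂ := by
  have hTA : ∀ x, toEuclideanCLM (𝕜 := ℂ) A (v (e.symm j)) x
      = ∑ y, A x y * v (e.symm j) y := fun x => rfl
  rw [euclInner_eq_sum]
  rw [Matrix.mul_apply]
  simp only [Matrix.mul_apply, Matrix.star_apply, Matrix.of_apply, hTA]
  simp_rw [Finset.sum_mul]
  rw [Finset.sum_comm]
  simp_rw [Finset.mul_sum]
  apply Finset.sum_congr rfl
  intro x _
  apply Finset.sum_congr rfl
  intro y _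
  rw [show (star (v (e.symm i) x)) = (starRingEnd ℂ) (v (e.symm i) x) from rfl]
  ring

lemma toEuclideanCLM_toMatrix_apply {m : ℕ} {W : Type*} [NormedAddCommGroup W]
    [InnerProductSpace ℂ W] [FiniteDimensional ℂ W]
    (bW : OrthonormalBasis (Fin m) ℂ W) (f : W →ₗ[ℂ] W) (x : W) :
    toEuclideanCLM (𝕜 := ℂ) (LinearMap.toMatrix bW.toBasis bW.toBasis f) (bW.repr x)
      = bW.repr (f x) := by
  have hco : (fun j => bW.repr x j) = ⇑(bW.toBasis.repr x) := by
    funext j; rw [bW.coe_toBasis_repr_apply]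
  ext i
  show ((LinearMap.toMatrix bW.toBasis bW.toBasis f) *ᵥ (fun j => bW.repr x j)) i
    = bW.repr (f x) i
  rw [hco, LinearMap.toMatrix_mulVec_repr, bW.coe_toBasis_repr_apply]

end AuxUnitaryBlock

set_option maxHeartbeats 2000000 in
/-- If `A ≠ 0`, `‖I + A‖ ≥ 1`, and `Au = 0` for every unit vector `u` attaining the
operator norm of `I + A`, then `‖I + A‖ = 1` and `A` is unitarily similar to a block
diagonal matrix `0ₖ ⊕ Atil` with `1 ≤ k < n`, `Atil` invertible of size `n - k`, and
`‖I + Atil‖ < 1`. -/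
theorem unitary_block_decomposition {n : ℕ} (A : Matrix (Fin n) (Fin n) ℂ) (hA : A ≠ 0)
    (h : 1 ≤ euclOpNorm (1 + A))
    (hker : ∀ u : EuclideanSpace ℂ (Fin n), ‖u‖ = 1 →
      ‖Matrix.toEuclideanCLM (𝕜 := ℂ) (1 + A) u‖ = euclOpNorm (1 + A) →
      Matrix.toEuclideanCLM (𝕜 := ℂ) A u = 0) :
    euclOpNorm (1 + A) = 1 ∧
    ∃ (k m : ℕ) (hkm : k + m = n), 1 ≤ k ∧ 1 ≤ m ∧
      ∃ U : Matrix (Fin n) (Fin n) ℂ, star U * U = 1 ∧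
        ∃ Atil : Matrix (Fin m) (Fin m) ℂ, IsUnit Atil.det ∧ euclOpNorm (1 + Atil) < 1 ∧
          star U * A * U =
            Matrix.reindex (finSumFinEquiv.trans (finCongr hkm))
              (finSumFinEquiv.trans (finCongr hkm))
              (Matrix.fromBlocks (0 : Matrix (Fin k) (Fin k) ℂ) 0 0 Atil) := by
  classical
  have hn : 0 < n := by
    rcases Nat.eq_zero_or_pos n with hn | hn
    · subst hn; exact absurd (Subsingleton.elim A 0) hA
    · exact hn
  haveI : Nontrivial (EuclideanSpace ℂ (Fin n)) :=
    Module.nontrivial_of_finrank_pos (R := ℂ) (by rw [finrank_euclideanSpace_fin]; exact hn)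
  set TA : EuclideanSpace ℂ (Fin n) →L[ℂ] EuclideanSpace ℂ (Fin n) :=
    toEuclideanCLM (𝕜 := ℂ) A with hTA
  set T : EuclideanSpace ℂ (Fin n) →L[ℂ] EuclideanSpace ℂ (Fin n) :=
    toEuclideanCLM (𝕜 := ℂ) (1 + A) with hTdef
  have hEnorm : euclOpNorm (1 + A) = ‖T‖ := rfl
  have hTsum : T = 1 + TA := by rw [hTdef, hTA, map_add, _root_.map_one]
  have hT : ∀ v, T v = v + TA v := by
    intro v; rw [hTsum]; rfl
  obtain ⟨u0, hu0n, hu0max⟩ := exists_norm_attained T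
  have hu0K : TA u0 = 0 := hker u0 hu0n (by rw [hu0max, hEnorm])
  have hnorm : euclOpNorm (1 + A) = 1 := by
    have h1 : T u0 = u0 := by rw [hT, hu0K, add_zero]
    rw [hEnorm, ← hu0max, h1, hu0n]
  have hTle : ‖T‖ ≤ 1 := by rw [← hEnorm, hnorm]
  set K := LinearMap.ker (TA : EuclideanSpace ℂ (Fin n) →ₗ[ℂ] EuclideanSpace ℂ (Fin n)) with hK
  have hadj1 : ContinuousLinearMap.adjoint (1 : EuclideanSpace ℂ (Fin n) →L[ℂ]
      EuclideanSpace ℂ (Fin n)) = 1 := by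
    rw [ContinuousLinearMap.one_def, ContinuousLinearMap.adjoint_id]
  have hadjTA : ∀ u ∈ K, ContinuousLinearMap.adjoint TA u = 0 := by
    intro u hu
    have hTu : T u = u := by
      rw [hT, (show TA u = 0 from LinearMap.mem_ker.mp hu), add_zero]
    have h1 : ContinuousLinearMap.adjoint T u = u := adjoint_fixed T hTle u hTu
    rw [hTsum, map_add, hadj1, ContinuousLinearMap.add_apply,
      ContinuousLinearMap.one_apply] at h1
    exact add_left_cancel (h1.trans (add_zero u).symm)
  have hrange : ∀ v, TA v ∈ Kᗮ := by
    intro v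
    rw [Submodule.mem_orthogonal]
    intro u hu
    rw [← ContinuousLinearMap.adjoint_inner_left, hadjTA u hu, inner_zero_left]
  set k := Module.finrank ℂ K with hk
  set m := Module.finrank ℂ Kᗮ with hm
  have hkm : k + m = n :=
    (Submodule.finrank_add_finrank_orthogonal K).trans finrank_euclideanSpace_fin
  have hk1 : 1 ≤ k := by
    have hu0m : u0 ∈ K := LinearMap.mem_ker.mpr hu0K
    have hu00 : u0 ≠ 0 := by
      intro h0; rw [h0, norm_zero] at hu0n; exact zero_ne_one hu0n
    haveI : Nontrivial K := nontrivial_of_ne ⟨u0, hu0m⟩ 0 (by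
      intro hcon
      exact hu00 (congrArg Subtype.val hcon))
    exact Module.finrank_pos
  have hm1 : 1 ≤ m := by
    by_contra hcon
    have hm0 : m = 0 := by omega
    have hKbot : Kᗮ = ⊥ := Submodule.finrank_eq_zero.mp hm0
    have hKtop : K = ⊤ := Submodule.orthogonal_eq_bot_iff.mp hKbot
    have hTA0 : TA = 0 := by
      refine ContinuousLinearMap.ext fun v => ?_
      have : v ∈ K := hKtop ▸ Submodule.mem_top
      simpa using LinearMap.mem_ker.mp this
    apply hA
    have hz : toEuclideanCLM (𝕜 := ℂ) A = toEuclideanCLM (𝕜 := ℂ) (0 : Matrix (Fin n) (Fin n) ℂ) := by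
      rw [← hTA, hTA0, map_zero]
    exact (toEuclideanCLM (𝕜 := ℂ) (n := Fin n)).injective hz
  -- orthonormal bases
  let bK : OrthonormalBasis (Fin k) ℂ K := stdOrthonormalBasis ℂ K
  let bM : OrthonormalBasis (Fin m) ℂ Kᗮ := stdOrthonormalBasis ℂ Kᗮ
  let b : Fin k ⊕ Fin m → EuclideanSpace ℂ (Fin n) :=
    Sum.elim (fun i => (bK i : EuclideanSpace ℂ (Fin n)))
      (fun j => (bM j : EuclideanSpace ℂ (Fin n)))
  have hbMK : ∀ (i : Fin k) (j : Fin m), ⟪(bK i : EuclideanSpace ℂ (Fin n)),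
      (bM j : EuclideanSpace ℂ (Fin n))⟫_ℂ = 0 := fun i j =>
    (Submodule.mem_orthogonal K _).mp (bM j).2 _ (bK i).2
  have hON : Orthonormal ℂ b := by
    rw [orthonormal_iff_ite]
    rintro (i | i) (j | j)
    · have := orthonormal_iff_ite.mp bK.orthonormal i j
      simp only [b, Sum.elim_inl, ← Submodule.coe_inner, this]
      simp
    · simpa [b] using hbMK i j
    · have := hbMK j i
      rw [← inner_eq_zero_symm] at this
      simpa [b] using this
    · have := orthonormal_iff_ite.mp bM.orthonormal i j
      simp only [b, Sum.elim_inr, ← Submodule.coe_inner, this]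
      simp
  haveI : Nonempty (Fin k ⊕ Fin m) := ⟨Sum.inl ⟨0, hk1⟩⟩
  have hcard : Fintype.card (Fin k ⊕ Fin m) =
      Module.finrank ℂ (EuclideanSpace ℂ (Fin n)) := by
    simp [finrank_euclideanSpace_fin, hkm]
  have hspan := hON.linearIndependent.span_eq_top_of_card_eq_finrank hcard
  let B : OrthonormalBasis (Fin k ⊕ Fin m) ℂ (EuclideanSpace ℂ (Fin n)) :=
    OrthonormalBasis.mk hON hspan.ge
  have hBb : ∀ s, B s = b s := fun s => by simp [B, OrthonormalBasis.coe_mk]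
  let e : Fin k ⊕ Fin m ≃ Fin n := finSumFinEquiv.trans (finCongr hkm)
  let U : Matrix (Fin n) (Fin n) ℂ := Matrix.of fun x y => b (e.symm y) x
  have hU1 : star U * U = 1 := star_mul_self_of_orthonormal e b hON
  -- the compressed operator on Kᗮ
  let Slin : Kᗮ →ₗ[ℂ] Kᗮ :=
    LinearMap.codRestrict Kᗮ ((TA : EuclideanSpace ℂ (Fin n) →ₗ[ℂ] EuclideanSpace ℂ (Fin n)).comp
      Kᗮ.subtype) (fun x => hrange x)
  have hSlin : ∀ x : Kᗮ, (Slin x : EuclideanSpace ℂ (Fin n)) = TA x := fun x => rfl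
  let Atil : Matrix (Fin m) (Fin m) ℂ := LinearMap.toMatrix bM.toBasis bM.toBasis Slin
  -- injectivity hence invertibility
  have hSinj : Function.Injective Slin := by
    rw [← LinearMap.ker_eq_bot]
    rw [Submodule.eq_bot_iff]
    intro x hx
    have h1 : TA x = 0 := by
      have := congrArg (Subtype.val) (LinearMap.mem_ker.mp hx)
      rwa [hSlin] at this
    have h2 : (x : EuclideanSpace ℂ (Fin n)) ∈ K := LinearMap.mem_ker.mpr h1
    have h3 : (x : EuclideanSpace ℂ (Fin n)) = 0 :=
      Submodule.disjoint_def.mp K.orthogonal_disjoint _ h2 x.2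
    exact Subtype.ext h3
  have hSbij : Function.Bijective Slin :=
    ⟨hSinj, (LinearMap.injective_iff_surjective).mp hSinj⟩
  have hdet : IsUnit Atil.det := by
    have h1 := LinearEquiv.isUnit_det (LinearEquiv.ofBijective Slin hSbij) bM.toBasis bM.toBasis
    have h2 : ((LinearEquiv.ofBijective Slin hSbij : Kᗮ ≃ₗ[ℂ] Kᗮ) : Kᗮ →ₗ[ℂ] Kᗮ) = Slin := rfl
    rwa [h2] at h1
  -- the norm bound
  haveI : Nontrivial (EuclideanSpace ℂ (Fin m)) :=
    Module.nontrivial_of_finrank_pos (R := ℂ) (by rw [finrank_euclideanSpace_fin]; exact hm1)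
  let SI : Kᗮ →ₗ[ℂ] Kᗮ := LinearMap.id + Slin
  have hmat : (1 : Matrix (Fin m) (Fin m) ℂ) + Atil =
      LinearMap.toMatrix bM.toBasis bM.toBasis SI := by
    rw [(LinearMap.toMatrix bM.toBasis bM.toBasis).map_add, LinearMap.toMatrix_id]
  have hkey : ∀ x : Kᗮ, toEuclideanCLM (𝕜 := ℂ) (1 + Atil) (bM.repr x)
      = bM.repr (SI x) := by
    intro x; rw [hmat]; exact toEuclideanCLM_toMatrix_apply bM _ x
  have hcoeadd : ∀ x : Kᗮ, ((SI x : Kᗮ) : EuclideanSpace ℂ (Fin n))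
      = T (x : EuclideanSpace ℂ (Fin n)) := by
    intro x
    rw [hT]
    rw [show SI x = x + Slin x from rfl, Submodule.coe_add, hSlin]
  have hgnorm : ∀ x : Kᗮ, ‖toEuclideanCLM (𝕜 := ℂ) (1 + Atil) (bM.repr x)‖
      = ‖T (x : EuclideanSpace ℂ (Fin n))‖ := by
    intro x
    rw [hkey, LinearIsometryEquiv.norm_map, ← Submodule.norm_coe, hcoeadd]
  have hgle1 : ∀ v : EuclideanSpace ℂ (Fin m), ‖v‖ = 1 →
      ‖toEuclideanCLM (𝕜 := ℂ) (1 + Atil) v‖ = 1 → False := by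
    intro v hv1 hveq
    set x : Kᗮ := bM.repr.symm v with hxd
    have hx : bM.repr x = v := bM.repr.apply_symm_apply v
    have hxn : ‖(x : EuclideanSpace ℂ (Fin n))‖ = 1 := by
      rw [Submodule.norm_coe]
      rw [← hx, LinearIsometryEquiv.norm_map] at hv1
      exact hv1
    have hTx : ‖T (x : EuclideanSpace ℂ (Fin n))‖ = 1 := by
      rw [← hgnorm x, hx, hveq]
    have h0 : TA (x : EuclideanSpace ℂ (Fin n)) = 0 := hker _ hxn (by rw [hTx, hnorm])
    have hxK : (x : EuclideanSpace ℂ (Fin n)) ∈ K := LinearMap.mem_ker.mpr h0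
    have hx0 : (x : EuclideanSpace ℂ (Fin n)) = 0 :=
      Submodule.disjoint_def.mp K.orthogonal_disjoint _ hxK x.2
    rw [hx0, norm_zero] at hxn
    exact zero_ne_one hxn
  have hlt : euclOpNorm (1 + Atil) < 1 := by
    obtain ⟨v1, hv1, hv1max⟩ := exists_norm_attained (toEuclideanCLM (𝕜 := ℂ) (1 + Atil))
    have hle : euclOpNorm (1 + Atil) ≤ 1 := by
      have hdefop : euclOpNorm (1 + Atil)
          = ‖toEuclideanCLM (𝕜 := ℂ) (n := Fin m) (1 + Atil)‖ := rfl
      rw [hdefop, ← hv1max]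
      have hx : bM.repr (bM.repr.symm v1) = v1 := bM.repr.apply_symm_apply v1
      rw [← hx, hgnorm (bM.repr.symm v1)]
      have hxn : ‖((bM.repr.symm v1 : Kᗮ) : EuclideanSpace ℂ (Fin n))‖ = 1 := by
        rw [Submodule.norm_coe]
        rw [← hx, LinearIsometryEquiv.norm_map] at hv1
        exact hv1
      calc ‖T ((bM.repr.symm v1 : Kᗮ) : EuclideanSpace ℂ (Fin n))‖
          ≤ ‖T‖ * ‖((bM.repr.symm v1 : Kᗮ) : EuclideanSpace ℂ (Fin n))‖ := T.le_opNorm _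
      _ ≤ 1 := by rw [hxn, mul_one]; exact hTle
    rcases lt_or_eq_of_le hle with hlt | heq
    · exact hlt
    · exact (hgle1 v1 hv1 (hv1max.trans heq)).elim
  -- the block structure
  have hAtilEntry : ∀ p q, Atil p q
      = ⟪(bM p : EuclideanSpace ℂ (Fin n)), TA (bM q : EuclideanSpace ℂ (Fin n))⟫_ℂ := by
    intro p q
    rw [show Atil = LinearMap.toMatrix bM.toBasis bM.toBasis Slin from rfl,
      LinearMap.toMatrix_apply, bM.coe_toBasis, bM.coe_toBasis_repr_apply,
      bM.repr_apply_apply, Submodule.coe_inner, hSlin]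
  have hblock : star (Matrix.of fun x y => b (e.symm y) x) * A
        * (Matrix.of fun x y => b (e.symm y) x)
      = Matrix.reindex e e
          (Matrix.fromBlocks (0 : Matrix (Fin k) (Fin k) ℂ) 0 0 Atil) := by
    ext i j
    rw [Matrix.reindex_apply, Matrix.submatrix_apply]
    rw [conj_entry_eq_inner e b A i j, ← hTA]
    rcases hsi : e.symm i with p | p <;> rcases hsj : e.symm j with q | q
    · have h0 : TA (b (Sum.inl q)) = 0 := LinearMap.mem_ker.mp (bK q).2
      simp [h0]
    · have h0 := (Submodule.mem_orthogonal K _).mp (hrange (b (Sum.inr q))) _ (bK p).2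
      simpa [b] using h0
    · have h0 : TA (b (Sum.inl q)) = 0 := LinearMap.mem_ker.mp (bK q).2
      simp [h0]
    · rw [Matrix.fromBlocks_apply₂₂, hAtilEntry p q]
      simp [b]
  exact ⟨hnorm, k, m, hkm, hk1, hm1, Matrix.of fun x y => b (e.symm y) x, hU1, Atil,
    hdet, hlt, hblock⟩
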